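/- Define d_{n,k} = Σ_{i=2k}^{n} (n-i+1)·C(n-k+1, i-2k). Then for all positive integers n, k with n ≥ 2k+1: (n-2k+1)·d_{n-1,k-1} = -2(n-k+1)·d_{n-1,k} + (2n-3k+3)·d_{n,k}. -/

import Mathlib

open Finset

/-- `d n k = Σ_{i=2k}^{n} (n-i+1)·C(n-k+1, i-2k)`. -/
def d (n k : ℕ) : ℕ :=
  ∑ i ∈ Finset.Icc (2 * k) n, (n - i + 1) * Nat.choose (n - k + 1) (i - 2 * k)

/-- Partial sum of binomial coefficients `Σ_{j=0}^{t} C(M,j)` (as an integer). -/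
def eS (M t : ℕ) : ℤ := ∑ j ∈ Finset.range (t+1), (M.choose j : ℤ)

/-- `Σ_{j=0}^{m} (m+1-j)·C(M,j)` (as an integer). -/
def eE (M m : ℕ) : ℤ := ∑ j ∈ Finset.range (m+1), ((m:ℤ)+1-j) * (M.choose j : ℤ)

lemma eS_succ (M t : ℕ) : eS M (t+1) = eS M t + (M.choose (t+1) : ℤ) := by
  simp [eS, Finset.sum_range_succ]

lemma eE_succ (M m : ℕ) : eE M (m+1) = eE M m + eS M (m+1) := by
  unfold eE eS
  have h1 : ∀ j ∈ Finset.range (m+2),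
      (((m+1:ℕ):ℤ)+1-j) * (M.choose j : ℤ)
      = ((m:ℤ)+1-j) * (M.choose j : ℤ) + (M.choose j : ℤ) := by
    intro j hj; push_cast; ring
  rw [Finset.sum_congr rfl h1, Finset.sum_add_distrib,
    Finset.sum_range_succ (fun j => ((m:ℤ)+1-j) * (M.choose j : ℤ)) (m+1)]
  push_cast
  ring

lemma Z1 (N j : ℕ) : ((N:ℤ) - j) * (N.choose j : ℤ) = ((j:ℤ)+1) * (N.choose (j+1) : ℤ) := by
  rcases le_or_gt j N with h | h
  · have h0 := Nat.choose_succ_right_eq N j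
    have h1 : ((N.choose (j+1) * (j+1) : ℕ) : ℤ) = ((N.choose j * (N - j) : ℕ) : ℤ) := by
      exact_mod_cast congrArg (Nat.cast : ℕ → ℤ) h0
    push_cast [Nat.cast_sub h] at h1
    linarith
  · simp [Nat.choose_eq_zero_of_lt h, Nat.choose_eq_zero_of_lt (by omega : N < j + 1)]

lemma Z2 (N k : ℕ) : ((N:ℤ)+1) * (N.choose k : ℤ) = ((k:ℤ)+1) * ((N+1).choose (k+1) : ℤ) := by
  have h0 := Nat.add_one_mul_choose_eq N k
  have h1 : ((Nat.succ N * N.choose k : ℕ) : ℤ) = (((N+1).choose (k+1) * Nat.succ k : ℕ) : ℤ) := by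
    exact_mod_cast congrArg (Nat.cast : ℕ → ℤ) h0
  push_cast at h1
  linarith

lemma Ppt (M t : ℕ) :
    ((t:ℤ)+3) * ((M+1).choose (t+3) : ℤ) + 2*((M:ℤ)+1) * (M.choose (t+1) : ℤ)
      = ((M:ℤ)+t+3) * ((M+1).choose (t+2) : ℤ) := by
  have h1 := Z1 (M+1) (t+2)
  have h2 := Z2 M (t+1)
  push_cast at h1 h2 ⊢
  linarith

lemma KS (M : ℕ) : ∀ t : ℕ,
    ((t:ℤ)+2) * eS (M+1) (t+2) + 2*((M:ℤ)+1) * eS M t = ((M:ℤ)+t+3) * eS (M+1) (t+1) := by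
  intro t
  induction t with
  | zero =>
      have h2 := Z2 M 1
      simp [eS, Finset.sum_range_succ, Nat.choose_one_right] at h2 ⊢
      push_cast at h2 ⊢
      nlinarith [h2]
  | succ t ih =>
      have h1 := eS_succ M t
      have h3 := eS_succ (M+1) (t+2)
      have hb := eS_succ (M+1) (t+1)
      have hp := Ppt M t
      push_cast at ih h1 h3 hb hp ⊢
      linear_combination ih + hp + ((t:ℤ)+3)*h3 + 2*((M:ℤ)+1)*h1 - ((M:ℤ)+(t:ℤ)+3)*hb

lemma Keq (M : ℕ) : ∀ m : ℕ,
    ((m:ℤ)+2) * eE (M+1) (m+2) + 2*((M:ℤ)+1) * eE M m = ((M:ℤ)+m+4) * eE (M+1) (m+1) := by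
  intro m
  induction m with
  | zero =>
      have h2 := Z2 M 1
      simp [eE, Finset.sum_range_succ, Nat.choose_one_right] at h2 ⊢
      push_cast at h2 ⊢
      nlinarith [h2]
  | succ m ih =>
      have h1 := eE_succ (M+1) (m+2)
      have h2 := eE_succ M m
      have h3 := eE_succ (M+1) (m+1)
      have hs := KS M (m+1)
      push_cast at ih h1 h2 h3 hs ⊢
      linear_combination ih + hs + ((m:ℤ)+3)*h1 + 2*((M:ℤ)+1)*h2 - ((M:ℤ)+(m:ℤ)+4)*h3

lemma d_cast (n k : ℕ) (h : 2*k ≤ n) : (d n k : ℤ) = eE (n - k + 1) (n - 2*k) := by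
  unfold d eE
  rw [Nat.cast_sum, ← Finset.Ico_add_one_right_eq_Icc, Finset.sum_Ico_eq_sum_range]
  have hr : n + 1 - 2*k = (n - 2*k) + 1 := by omega
  rw [hr]
  apply Finset.sum_congr rfl
  intro j hj
  rw [Finset.mem_range] at hj
  have hjle : j ≤ n - 2*k := by omega
  have h1 : 2*k + j - 2*k = j := by omega
  have h2 : n - (2*k + j) + 1 = (n - 2*k) - j + 1 := by omega
  rw [h1, h2]
  push_cast [Nat.cast_sub hjle]
  ring

theorem stmt7 (n k : ℕ) (hn : 1 ≤ n) (hk : 1 ≤ k) (h : 2 * k + 1 ≤ n) :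
    ((n : ℤ) - 2 * k + 1) * (d (n - 1) (k - 1) : ℤ) =
      -2 * ((n : ℤ) - k + 1) * (d (n - 1) k : ℤ) +
        (2 * (n : ℤ) - 3 * k + 3) * (d n k : ℤ) := by
  obtain ⟨m, rfl⟩ : ∃ m, n = m + 2*k + 1 := ⟨n - 2*k - 1, by omega⟩
  set M := m + k + 1 with hM
  have e1 : (d (m + 2*k + 1 - 1) (k - 1) : ℤ) = eE (M+1) (m+2) := by
    rw [d_cast _ _ (by omega)]
    have a1 : m + 2*k + 1 - 1 - (k-1) + 1 = M + 1 := by omega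
    have a2 : m + 2*k + 1 - 1 - 2*(k-1) = m + 2 := by omega
    rw [a1, a2]
  have e2 : (d (m + 2*k + 1 - 1) k : ℤ) = eE M m := by
    rw [d_cast _ _ (by omega)]
    have a1 : m + 2*k + 1 - 1 - k + 1 = M := by omega
    have a2 : m + 2*k + 1 - 1 - 2*k = m := by omega
    rw [a1, a2]
  have e3 : (d (m + 2*k + 1) k : ℤ) = eE (M+1) (m+1) := by
    rw [d_cast _ _ (by omega)]
    have a1 : m + 2*k + 1 - k + 1 = M + 1 := by omega
    have a2 : m + 2*k + 1 - 2*k = m + 1 := by omega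
    rw [a1, a2]
  rw [e1, e2, e3]
  have hK := Keq M m
  push_cast [hM] at hK ⊢
  linarith
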